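/- arXiv:2405.03816 — 2 statements merged into one kernel-verified Lean document; each statement's English description precedes it below -/
import Mathlib

section
/- Let β ∈ (1,2] satisfy 1 = Σ_{i=1}^{N} β^{-n_i} for some pairwise distinct n_1 < ... < n_N in ℕ. If a real number s ∈ [0,1] has a β-expansion ending in 0^∞ with at least one nonzero digit, then s has infinitely many distinct β-expansions. -/
/-- If `β ∈ (1,2]` satisfies `1 = Σ_{i=1}^N β^{-n_i}` for pairwise distinct
`n_1 < ... < n_N` in `ℕ`, and `s ∈ [0,1]` has a `β`-expansion ending in `0^∞`
with at least one nonzero digit, then `s` has infinitely many distinct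
`β`-expansions. -/
theorem infinitely_many_beta_expansions (β : ℝ) (hβ1 : 1 < β) (hβ2 : β ≤ 2)
    (N : ℕ) (hN : 0 < N) (m : Fin N → ℕ) (hm : StrictMono m) (hm1 : ∀ i, 1 ≤ m i)
    (halg : (1 : ℝ) = ∑ i : Fin N, (β ^ (m i))⁻¹)
    (s : ℝ) (hs : s ∈ Set.Icc (0 : ℝ) 1)
    (x : ℕ → ℕ) (hx : ∀ i, x i ≤ 1)
    (hexp : ∑' i : ℕ, (x i : ℝ) * (β ^ (i + 1))⁻¹ = s)
    (htail : ∃ M : ℕ, ∀ i, M ≤ i → x i = 0)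
    (hnonzero : ∃ j, x j ≠ 0) :
    Set.Infinite {y : ℕ → ℕ | (∀ i, y i ≤ 1) ∧
      ∑' i : ℕ, (y i : ℝ) * (β ^ (i + 1))⁻¹ = s} := by
  classical
  have hβ0 : (0 : ℝ) < β := lt_trans one_pos hβ1
  set w : ℕ → ℝ := fun i => (β ^ (i + 1))⁻¹ with hw
  set G : (ℕ → ℕ) → ℕ → Prop := fun y J =>
    (∀ i, y i ≤ 1) ∧ y J = 1 ∧ (∀ i, J < i → y i = 0) ∧
      ∑' i : ℕ, (y i : ℝ) * w i = s with hG
  -- tsum of finitely supported sequences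
  have htsum : ∀ (y : ℕ → ℕ) (J : ℕ), (∀ i, J < i → y i = 0) →
      ∑' i : ℕ, (y i : ℝ) * w i = ∑ i ∈ Finset.range (J + 1), (y i : ℝ) * w i := by
    intro y J h0
    refine tsum_eq_sum ?_
    intro i hi
    rw [Finset.mem_range, not_lt] at hi
    rw [h0 i (by omega)]
    simp
  -- the key step: replace the final 1 using the relation
  have hstep : ∀ y J, G y J → ∃ y' J', J < J' ∧ G y' J' := by
    intro y J hyG
    obtain ⟨hy1, hyJ, hy0, hysum⟩ := hyG
    set L : Fin N := ⟨N - 1, Nat.sub_lt hN one_pos⟩ with hL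
    set J' := J + m L with hJ'
    set S : Finset ℕ := Finset.image (fun k : Fin N => J + m k) Finset.univ with hS
    have hJS : J ∉ S := by
      simp only [hS, Finset.mem_image]
      rintro ⟨k, -, hk⟩
      have := hm1 k; omega
    have hmem_gt : ∀ i ∈ S, J < i := by
      intro i hi
      simp only [hS, Finset.mem_image] at hi
      obtain ⟨k, -, rfl⟩ := hi
      have := hm1 k; omega
    have hmem_le : ∀ i ∈ S, i ≤ J' := by
      intro i hi
      simp only [hS, Finset.mem_image] at hi
      obtain ⟨k, -, rfl⟩ := hi
      have hk : k ≤ L := by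
        rw [Fin.le_def]
        have := k.isLt
        simp only [hL]
        omega
      have := hm.monotone hk
      omega
    have hJ'S : J' ∈ S := by
      simp only [hS, Finset.mem_image]
      exact ⟨L, Finset.mem_univ _, rfl⟩
    have hJJ' : J < J' := by
      have := hm1 L; omega
    set y' : ℕ → ℕ := fun i => if i ∈ S then 1 else if i = J then 0 else y i with hy'
    have hy'1 : ∀ i, y' i ≤ 1 := by
      intro i
      simp only [hy']
      split
      · exact le_refl 1
      · split
        · exact Nat.zero_le 1
        · exact hy1 i
    have hy'J' : y' J' = 1 := by simp [hy', hJ'S]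
    have hy'0 : ∀ i, J' < i → y' i = 0 := by
      intro i hi
      have h1 : i ∉ S := fun h => absurd (hmem_le i h) (by omega)
      have h2 : i ≠ J := by omega
      simp only [hy', if_neg h1, if_neg h2]
      exact hy0 i (by omega)
    -- the sum over S of w equals w J
    have hkey : ∑ i ∈ S, w i = w J := by
      rw [hS, Finset.sum_image (by
        intro a _ b _ hab
        exact hm.injective (by simp only at hab; omega))]
      have : ∀ k : Fin N, w (J + m k) = w J * (β ^ (m k))⁻¹ := by
        intro k
        simp only [hw]
        rw [show J + m k + 1 = (J + 1) + m k by ring, pow_add, mul_inv]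
      simp_rw [this]
      rw [← Finset.mul_sum, ← halg, mul_one]
    -- sum equality
    have hsum' : ∑' i : ℕ, (y' i : ℝ) * w i = s := by
      rw [htsum y' J' hy'0]
      have hys : ∑' i : ℕ, (y i : ℝ) * w i
          = ∑ i ∈ Finset.range (J' + 1), (y i : ℝ) * w i :=
        htsum y J' (fun i hi => hy0 i (by omega))
      rw [← hysum, hys]
      have hdiff : ∑ i ∈ Finset.range (J' + 1),
          ((y' i : ℝ) * w i - (y i : ℝ) * w i) = 0 := by
        rw [← Finset.sum_subset (s₁ := insert J S) (by
          intro i hi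
          rcases Finset.mem_insert.mp hi with rfl | hi
          · exact Finset.mem_range.mpr (by omega)
          · exact Finset.mem_range.mpr (by have := hmem_le i hi; omega))
          (by
            intro i _ hi
            rw [Finset.mem_insert] at hi
            push_neg at hi
            simp only [hy', if_neg hi.2, if_neg hi.1, sub_self])]
        rw [Finset.sum_insert hJS]
        have h1 : (y' J : ℝ) * w J - (y J : ℝ) * w J = -w J := by
          simp [hy', hJS, hyJ]
        have h2 : ∀ i ∈ S, (y' i : ℝ) * w i - (y i : ℝ) * w i = w i := by
          intro i hi
          have := hy0 i (hmem_gt i hi)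
          simp [hy', hi, this]
        rw [h1, Finset.sum_congr rfl h2, hkey]
        ring
      have := Finset.sum_sub_distrib (s := Finset.range (J' + 1))
        (f := fun i => (y' i : ℝ) * w i) (g := fun i => (y i : ℝ) * w i)
      rw [this] at hdiff
      linarith
    exact ⟨y', J', hJJ', hy'1, hy'J', hy'0, hsum'⟩
  -- initial expansion: find the last nonzero digit of x
  have hinit : ∃ J0, G x J0 := by
    obtain ⟨j, hj⟩ := hnonzero
    obtain ⟨M, hM⟩ := htail
    set T : Finset ℕ := (Finset.range M).filter (fun i => x i ≠ 0) with hT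
    have hjT : j ∈ T := by
      simp only [hT, Finset.mem_filter, Finset.mem_range]
      refine ⟨?_, hj⟩
      by_contra h
      exact hj (hM j (by omega))
    have hTne : T.Nonempty := ⟨j, hjT⟩
    refine ⟨T.max' hTne, ?_, ?_, ?_, hexp⟩
    · exact hx
    · have := (Finset.mem_filter.mp (T.max'_mem hTne)).2
      have := hx (T.max' hTne)
      omega
    · intro i hi
      by_contra h
      have hiT : i ∈ T := by
        simp only [hT, Finset.mem_filter, Finset.mem_range]
        refine ⟨?_, h⟩
        by_contra h'
        exact h (hM i (by omega))
      have := T.le_max' i hiT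
      omega
  obtain ⟨J0, hJ0⟩ := hinit
  choose F K hK1 hK2 using hstep
  let seq : ℕ → Σ' (y : ℕ → ℕ) (J : ℕ), G y J := fun n =>
    Nat.rec ⟨x, J0, hJ0⟩
      (fun _ p => ⟨F p.1 p.2.1 p.2.2, K p.1 p.2.1 p.2.2, hK2 p.1 p.2.1 p.2.2⟩) n
  have hlt : ∀ n, (seq n).2.1 < (seq (n + 1)).2.1 := fun n =>
    hK1 (seq n).1 (seq n).2.1 (seq n).2.2
  have hmono : StrictMono (fun n => (seq n).2.1) := strictMono_nat_of_lt_succ hlt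
  apply Set.infinite_of_injective_forall_mem (f := fun n => (seq n).1)
  · intro a b hab
    by_contra hne
    rcases Nat.lt_or_ge a b with h | h
    · have h1 : (seq b).1 (seq b).2.1 = 1 := (seq b).2.2.2.1
      have h2 : (seq a).1 (seq b).2.1 = 0 :=
        (seq a).2.2.2.2.1 _ (hmono h)
      rw [show (seq a).1 = (seq b).1 from hab] at h2
      omega
    · have h : b < a := by omega
      have h1 : (seq a).1 (seq a).2.1 = 1 := (seq a).2.2.2.1
      have h2 : (seq b).1 (seq a).2.1 = 0 :=
        (seq b).2.2.2.2.1 _ (hmono h)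
      rw [show (seq b).1 = (seq a).1 from hab.symm] at h2
      omega
  · intro n
    exact ⟨(seq n).2.2.1, (seq n).2.2.2.2.2⟩
end

section
/- Let β ∈ (1,2) be an algebraic integer whose minimal polynomial has constant term T_β with |T_β| ≥ 2 (class 𝒞). Then distinct words represent distinct values: for all n and all x ≠ y ∈ {0,1}^n, Σ_{i=1}^n x_i β^{-i} ≠ Σ_{i=1}^n y_i β^{-i}. -/
open Polynomial

/-- If `β ∈ (1,2)` is an algebraic integer whose (monic, integer) minimal
polynomial has constant term `T_β` with `|T_β| ≥ 2`, then distinct `{0,1}`-words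
of length `n` represent distinct values in base `β`. -/
theorem class_C_no_multiplicities (β : ℝ) (hβ1 : 1 < β) (hβ2 : β < 2)
    (hint : IsIntegral ℤ β) (hT : 2 ≤ |(minpoly ℤ β).coeff 0|)
    (n : ℕ) (x y : Fin n → Fin 2) (hxy : x ≠ y) :
    (∑ i : Fin n, ((x i : ℕ) : ℝ) * (β ^ ((i : ℕ) + 1))⁻¹)
      ≠ ∑ i : Fin n, ((y i : ℕ) : ℝ) * (β ^ ((i : ℕ) + 1))⁻¹ := by
  intro heq
  have hβ0 : (0:ℝ) < β := lt_trans one_pos hβ1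
  have hβne : β ≠ 0 := ne_of_gt hβ0
  set d : Fin n → ℤ := fun i => (x i : ℤ) - (y i : ℤ) with hd
  obtain ⟨j, hj⟩ : ∃ j, d j ≠ 0 := by
    by_contra h
    push_neg at h
    apply hxy
    funext i
    have h1 := h i
    have h2 : ((x i : ℕ) : ℤ) = ((y i : ℕ) : ℤ) := by
      simp only [hd] at h1; omega
    exact Fin.ext (by exact_mod_cast h2)
  set D : ℤ[X] := ∑ i : Fin n, monomial (n - 1 - (i:ℕ)) (d i) with hD
  have hinj : ∀ i i' : Fin n, n - 1 - (i:ℕ) = n - 1 - (i':ℕ) → i = i' := by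
    intro i i' h
    have := i.is_lt; have := i'.is_lt
    exact Fin.ext (by omega)
  have hcoeffj : D.coeff (n - 1 - (j:ℕ)) = d j := by
    rw [hD, finset_sum_coeff]
    rw [Finset.sum_eq_single j]
    · simp [coeff_monomial]
    · intro i _ hij
      rw [coeff_monomial, if_neg (fun h => hij (hinj i j h))]
    · simp
  have hDne : D ≠ 0 := by
    intro h
    rw [h] at hcoeffj
    simp at hcoeffj
    exact hj hcoeffj.symm
  have hdle : ∀ i, |d i| ≤ 1 := by
    intro i
    have := (x i).is_lt; have := (y i).is_lt
    simp only [hd]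
    rw [abs_le]; omega
  have hcoeff : ∀ k, |D.coeff k| ≤ 1 := by
    intro k
    rw [hD, finset_sum_coeff]
    by_cases h : ∃ i : Fin n, n - 1 - (i:ℕ) = k
    · obtain ⟨i0, hi0⟩ := h
      rw [Finset.sum_eq_single i0]
      · rw [coeff_monomial, if_pos hi0]; exact hdle i0
      · intro i _ hii
        rw [coeff_monomial, if_neg (fun hh => hii (hinj i i0 (by rw [hh, hi0])))]
      · simp
    · push_neg at h
      rw [Finset.sum_eq_zero]
      · simp
      · intro i _
        rw [coeff_monomial, if_neg (h i)]
  have heval : aeval β D = 0 := by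
    rw [hD]
    simp only [map_sum, aeval_monomial, algebraMap_int_eq, eq_intCast]
    have hterm : ∀ i : Fin n,
        ((d i : ℤ) : ℝ) * β ^ (n - 1 - (i:ℕ))
          = β ^ n * ((((x i : ℕ) : ℝ)) * (β ^ ((i:ℕ) + 1))⁻¹)
            - β ^ n * ((((y i : ℕ) : ℝ)) * (β ^ ((i:ℕ) + 1))⁻¹) := by
      intro i
      have hlt := i.is_lt
      have hpow : β ^ (n - 1 - (i:ℕ)) * β ^ ((i:ℕ) + 1) = β ^ n := by
        rw [← pow_add]; congr 1; omega
      have hne : β ^ ((i:ℕ) + 1) ≠ 0 := pow_ne_zero _ hβne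
      have hc : ((d i : ℤ) : ℝ) = ((x i : ℕ) : ℝ) - ((y i : ℕ) : ℝ) := by
        simp only [hd]; push_cast; ring
      field_simp
      rw [← hpow]
      rw [hc] <;> push_cast <;> ring
    rw [Finset.sum_congr rfl (fun i _ => hterm i), Finset.sum_sub_distrib,
      ← Finset.mul_sum, ← Finset.mul_sum, heq, sub_self]
  have hdvd := minpoly.isIntegrallyClosed_dvd hint heval
  obtain ⟨Q, hQ⟩ := hdvd
  have hQne : Q ≠ 0 := by
    rintro rfl
    rw [mul_zero] at hQ
    exact hDne hQ
  have htc : D.trailingCoeff = (minpoly ℤ β).trailingCoeff * Q.trailingCoeff := by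
    rw [hQ, trailingCoeff_mul]
  have hP0 : (minpoly ℤ β).coeff 0 ≠ 0 := by
    intro h; rw [h] at hT; simp at hT
  have hPtc : (minpoly ℤ β).trailingCoeff = (minpoly ℤ β).coeff 0 := by
    unfold Polynomial.trailingCoeff
    rw [natTrailingDegree_eq_zero.mpr (Or.inr hP0)]
  have hQtc : Q.trailingCoeff ≠ 0 := fun h => hQne (trailingCoeff_eq_zero.mp h)
  have h1 : (1:ℤ) ≤ |Q.trailingCoeff| := Int.one_le_abs hQtc
  have h2 : |D.trailingCoeff| ≤ 1 := hcoeff _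
  rw [htc, hPtc, abs_mul] at h2
  nlinarith [abs_nonneg ((minpoly ℤ β).coeff 0), abs_nonneg Q.trailingCoeff]
end
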